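/- Let ψ, φ : [0,∞) → [0,∞] be weak Φ-functions. Then φ ≃ ψ if and only if φ⁻¹ ≈ ψ⁻¹. More precisely, if ψ(t/L) ≤ φ(t) ≤ ψ(Lt) for some L ≥ 1 and all t ≥ 0, then ψ⁻¹(t)/L ≤ φ⁻¹(t) ≤ L ψ⁻¹(t) for all t ≥ 0. -/

import Mathlib

open scoped NNReal ENNReal

/-- Left inverse `φ⁻¹(s) = inf {t ≥ 0 : φ t ≥ s}` of a `Φ`-function. -/
noncomputable def leftInvE (φ : ℝ → ℝ≥0∞) (s : ℝ≥0∞) : ℝ :=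
  sInf {t : ℝ | 0 ≤ t ∧ s ≤ φ t}

lemma leftInvE_bdd (φ : ℝ → ℝ≥0∞) (s : ℝ≥0∞) :
    BddBelow {t : ℝ | 0 ≤ t ∧ s ≤ φ t} := ⟨0, fun _ hx => hx.1⟩

lemma leftInvE_nonneg (φ : ℝ → ℝ≥0∞) (s : ℝ≥0∞) : 0 ≤ leftInvE φ s :=
  Real.sInf_nonneg (fun _ hx => hx.1)

lemma leftInvE_le {φ : ℝ → ℝ≥0∞} {s : ℝ≥0∞} {t : ℝ} (ht : 0 ≤ t) (h : s ≤ φ t) :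
    leftInvE φ s ≤ t := csInf_le (leftInvE_bdd φ s) ⟨ht, h⟩

lemma le_leftInvE {φ : ℝ → ℝ≥0∞} {s : ℝ≥0∞}
    (hmono : ∀ s t : ℝ, 0 ≤ s → s ≤ t → φ s ≤ φ t) {t : ℝ} (ht : 0 ≤ t)
    (h : φ t < s) (hne : {x : ℝ | 0 ≤ x ∧ s ≤ φ x}.Nonempty) :
    t ≤ leftInvE φ s := by
  refine le_csInf hne fun x hx => ?_
  by_contra hc
  push_neg at hc
  exact absurd (hx.2.trans (hmono x t hx.1 hc.le)) (not_le.mpr h)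

lemma leftInvE_set_nonempty {φ : ℝ → ℝ≥0∞}
    (hcoer : Filter.Tendsto φ Filter.atTop (nhds ⊤)) {s : ℝ≥0∞} (hs : s < ⊤) :
    {x : ℝ | 0 ≤ x ∧ s ≤ φ x}.Nonempty := by
  have h1 : ∀ᶠ t in Filter.atTop, φ t ∈ Set.Ioi s :=
    hcoer.eventually_mem (Ioi_mem_nhds hs)
  obtain ⟨a, ha⟩ := Filter.eventually_atTop.1 h1
  exact ⟨max a 0, le_max_right _ _, (ha (max a 0) (le_max_left _ _)).le⟩

/-- Quantitative direction. -/
lemma quant (φ ψ : ℝ → ℝ≥0∞) (L : ℝ) (hL : 1 ≤ L)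
    (h : ∀ t : ℝ, 0 ≤ t → ψ (t / L) ≤ φ t ∧ φ t ≤ ψ (L * t)) (s : ℝ≥0∞) :
    leftInvE ψ s / L ≤ leftInvE φ s ∧ leftInvE φ s ≤ L * leftInvE ψ s := by
  have hL0 : (0:ℝ) < L := lt_of_lt_of_le one_pos hL
  set Sφ : Set ℝ := {t : ℝ | 0 ≤ t ∧ s ≤ φ t} with hSφ
  set Sψ : Set ℝ := {t : ℝ | 0 ≤ t ∧ s ≤ ψ t} with hSψ
  have hmapφ : ∀ t ∈ Sφ, L * t ∈ Sψ := fun t ht =>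
    ⟨mul_nonneg hL0.le ht.1, ht.2.trans (h t ht.1).2⟩
  have hmapψ : ∀ t ∈ Sψ, L * t ∈ Sφ := by
    intro t ht
    refine ⟨mul_nonneg hL0.le ht.1, ht.2.trans ?_⟩
    have h2 := (h (L * t) (mul_nonneg hL0.le ht.1)).1
    rwa [mul_div_cancel_left₀ _ (ne_of_gt hL0)] at h2
  constructor
  · rcases Sφ.eq_empty_or_nonempty with he | hne
    · have heψ : Sψ = ∅ := by
        rcases Sψ.eq_empty_or_nonempty with h' | ⟨t, ht⟩
        · exact h'
        · exact absurd (hmapψ t ht) (by simp [he])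
      show sInf Sψ / L ≤ sInf Sφ
      rw [he, heψ, Real.sInf_empty, zero_div]
    · refine le_csInf hne fun t ht => ?_
      have := csInf_le (leftInvE_bdd ψ s) (hmapφ t ht)
      rw [div_le_iff₀ hL0]
      calc sInf Sψ ≤ L * t := this
      _ = t * L := mul_comm _ _
  · rcases Sψ.eq_empty_or_nonempty with he | hne
    · have heφ : Sφ = ∅ := by
        rcases Sφ.eq_empty_or_nonempty with h' | ⟨t, ht⟩
        · exact h'
        · exact absurd (hmapφ t ht) (by simp [he])
      show sInf Sφ ≤ L * sInf Sψ
      rw [he, heφ, Real.sInf_empty, mul_zero]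
    · have key : sInf Sφ / L ≤ sInf Sψ := by
        refine le_csInf hne fun t ht => ?_
        have := csInf_le (leftInvE_bdd φ s) (hmapψ t ht)
        rw [div_le_iff₀ hL0]
        calc sInf Sφ ≤ L * t := this
        _ = t * L := mul_comm _ _
      show sInf Sφ ≤ L * sInf Sψ
      rw [div_le_iff₀ hL0] at key
      linarith [key]

/-- For weak `Φ`-functions `φ, ψ`: `φ ≃ ψ` if and only if `φ⁻¹ ≈ ψ⁻¹`; more precisely,
if `ψ(t/L) ≤ φ(t) ≤ ψ(Lt)` for some `L ≥ 1`, then `ψ⁻¹(t)/L ≤ φ⁻¹(t) ≤ L ψ⁻¹(t)`. -/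
theorem stmt_7 (φ ψ : ℝ → ℝ≥0∞)
    (hφmono : ∀ s t : ℝ, 0 ≤ s → s ≤ t → φ s ≤ φ t)
    (hψmono : ∀ s t : ℝ, 0 ≤ s → s ≤ t → ψ s ≤ ψ t)
    (hφ0 : φ 0 = 0) (hψ0 : ψ 0 = 0)
    (hφlim0 : Filter.Tendsto φ (nhdsWithin 0 (Set.Ioi 0)) (nhds 0))
    (hψlim0 : Filter.Tendsto ψ (nhdsWithin 0 (Set.Ioi 0)) (nhds 0))
    (hφcoer : Filter.Tendsto φ Filter.atTop (nhds ⊤))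
    (hψcoer : Filter.Tendsto ψ Filter.atTop (nhds ⊤))
    (hφaInc : ∃ a : ℝ≥0, 1 ≤ a ∧ ∀ s t : ℝ, 0 < s → s ≤ t →
      φ s / ENNReal.ofReal s ≤ a * (φ t / ENNReal.ofReal t))
    (hψaInc : ∃ a : ℝ≥0, 1 ≤ a ∧ ∀ s t : ℝ, 0 < s → s ≤ t →
      ψ s / ENNReal.ofReal s ≤ a * (ψ t / ENNReal.ofReal t)) :
    ((∃ L : ℝ, 1 ≤ L ∧ ∀ t : ℝ, 0 ≤ t → ψ (t / L) ≤ φ t ∧ φ t ≤ ψ (L * t)) ↔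
      (∃ c₁ c₂ : ℝ, 0 < c₁ ∧ 0 < c₂ ∧ ∀ t : ℝ≥0∞,
        c₁ * leftInvE ψ t ≤ leftInvE φ t ∧ leftInvE φ t ≤ c₂ * leftInvE ψ t)) ∧
    (∀ L : ℝ, 1 ≤ L → (∀ t : ℝ, 0 ≤ t → ψ (t / L) ≤ φ t ∧ φ t ≤ ψ (L * t)) →
      ∀ t : ℝ≥0∞, leftInvE ψ t / L ≤ leftInvE φ t ∧ leftInvE φ t ≤ L * leftInvE ψ t) := by
  refine ⟨⟨?_, ?_⟩, fun L hL h => quant φ ψ L hL h⟩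
  · rintro ⟨L, hL, h⟩
    have hL0 : (0:ℝ) < L := lt_of_lt_of_le one_pos hL
    refine ⟨1 / L, L, by positivity, hL0, fun s => ?_⟩
    obtain ⟨h1, h2⟩ := quant φ ψ L hL h s
    constructor
    · rwa [one_div, inv_mul_eq_div]
    · exact h2
  · rintro ⟨c₁, c₂, hc₁, hc₂, h⟩
    set L : ℝ := max 1 (max (2 / c₁) (2 * c₂)) with hLdef
    have hL : 1 ≤ L := le_max_left _ _
    have hL0 : (0:ℝ) < L := lt_of_lt_of_le one_pos hL
    have hLc₁ : 2 / c₁ ≤ L := le_trans (le_max_left _ _) (le_max_right _ _)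
    have hLc₂ : 2 * c₂ ≤ L := le_trans (le_max_right _ _) (le_max_right _ _)
    refine ⟨L, hL, fun t ht => ?_⟩
    constructor
    · -- ψ (t / L) ≤ φ t
      rcases eq_or_lt_of_le ht with h0 | htpos
      · rw [← h0, zero_div, hψ0]; exact zero_le
      · by_contra hcon
        push_neg at hcon
        obtain ⟨s', hs'1, hs'2, hs'3⟩ : ∃ s', φ t < s' ∧ s' ≤ ψ (t / L) ∧ s' < ⊤ := by
          rcases eq_top_or_lt_top (ψ (t / L)) with htop | hlt
          · obtain ⟨s', h1, h2⟩ := exists_between (htop ▸ hcon)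
            exact ⟨s', h1, htop ▸ le_top, h2⟩
          · exact ⟨ψ (t / L), hcon, le_rfl, hlt⟩
        have hneφ := leftInvE_set_nonempty hφcoer hs'3
        have h1 : t ≤ leftInvE φ s' := le_leftInvE hφmono ht hs'1 hneφ
        have h2 : leftInvE ψ s' ≤ t / L := leftInvE_le (div_nonneg ht hL0.le) hs'2
        have h3 := (h s').2
        have h4 : t ≤ c₂ * (t / L) :=
          h1.trans (h3.trans (mul_le_mul_of_nonneg_left h2 hc₂.le))
        rw [mul_div_assoc'] at h4
        rw [le_div_iff₀ hL0] at h4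
        nlinarith
    · -- φ t ≤ ψ (L * t)
      rcases eq_or_lt_of_le ht with h0 | htpos
      · rw [← h0, mul_zero, hψ0, hφ0]
      · by_contra hcon
        push_neg at hcon
        obtain ⟨s', hs'1, hs'2, hs'3⟩ : ∃ s', ψ (L * t) < s' ∧ s' ≤ φ t ∧ s' < ⊤ := by
          rcases eq_top_or_lt_top (φ t) with htop | hlt
          · obtain ⟨s', h1, h2⟩ := exists_between (htop ▸ hcon)
            exact ⟨s', h1, htop ▸ le_top, h2⟩
          · exact ⟨φ t, hcon, le_rfl, hlt⟩
        have hneψ := leftInvE_set_nonempty hψcoer hs'3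
        have h1 : L * t ≤ leftInvE ψ s' :=
          le_leftInvE hψmono (mul_nonneg hL0.le ht) hs'1 hneψ
        have h2 : leftInvE φ s' ≤ t := leftInvE_le ht hs'2
        have h3 := (h s').1
        have h4 : c₁ * (L * t) ≤ t :=
          le_trans (mul_le_mul_of_nonneg_left h1 hc₁.le) (h3.trans h2)
        have h5 : 2 ≤ L * c₁ := (div_le_iff₀ hc₁).mp hLc₁
        nlinarith
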